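/- In a ⋆-involutive idempotent residuated chain (one satisfying x^{⋆⋆} = x, with x^⋆ = x^ℓ ∧ x^r), the identity element 1 is isolated: for every x ≠ 1, x^ℓ ≠ 1 and x^r ≠ 1. -/
import Mathlib


/-- `x^⋆ = x^ℓ ∧ x^r`. -/
def lstar {A : Type*} [Lattice A] [One A] (ld rd : A → A → A) (x : A) : A :=
  rd 1 x ⊓ ld x 1

/-- In a ⋆-involutive idempotent residuated chain, `1` is isolated: for `x ≠ 1`,
`x^ℓ ≠ 1` and `x^r ≠ 1`. -/
theorem stmt17 {A : Type*} [LinearOrder A] [Monoid A]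
    (ld rd : A → A → A)
    (resl : ∀ x y z : A, x * y ≤ z ↔ y ≤ ld x z)
    (resr : ∀ x y z : A, x * y ≤ z ↔ x ≤ rd z y)
    (idem : ∀ x : A, x * x = x)
    (starinv : ∀ x : A, lstar ld rd (lstar ld rd x) = x) :
    ∀ x : A, x ≠ 1 → rd 1 x ≠ 1 ∧ ld x 1 ≠ 1 := by
  intro x hx
  -- basic residuation facts
  have hrx : rd 1 x * x ≤ 1 := (resr (rd 1 x) x 1).mpr le_rfl
  have hlx : x * ld x 1 ≤ 1 := (resl x (ld x 1) 1).mpr le_rfl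
  have hrd11 : rd 1 (1 : A) = 1 := by
    have h1 : rd 1 (1 : A) ≤ 1 := by
      have := (resr (rd 1 (1:A)) 1 1).mpr le_rfl
      simpa using this
    have h2 : (1 : A) ≤ rd 1 1 := by
      have : (1 : A) * 1 ≤ 1 := by simp
      exact (resr 1 1 1).mp this
    exact le_antisymm h1 h2
  have hld11 : ld (1 : A) 1 = 1 := by
    have h1 : ld (1 : A) 1 ≤ 1 := by
      have := (resl (1:A) (ld 1 1) 1).mpr le_rfl
      simpa using this
    have h2 : (1 : A) ≤ ld 1 1 := by
      have : (1 : A) * 1 ≤ 1 := by simp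
      exact (resl 1 1 1).mp this
    exact le_antisymm h1 h2
  have hstar1 : lstar ld rd (1 : A) = 1 := by
    simp [lstar, hrd11, hld11]
  rcases lt_or_gt_of_ne hx with hlt | hgt
  · -- x < 1 : both residuals are ≥ 1
    have hrge : (1 : A) ≤ rd 1 x := by
      refine (resr 1 x 1).mp ?_
      simpa using hlt.le
    have hlge : (1 : A) ≤ ld x 1 := by
      refine (resl x 1 1).mp ?_
      simpa using hlt.le
    constructor
    · intro h
      have hstar : lstar ld rd x = 1 := by
        simp [lstar, h, inf_eq_left.mpr hlge]
      have := starinv x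
      rw [hstar, hstar1] at this
      exact hx this.symm
    · intro h
      have hstar : lstar ld rd x = 1 := by
        simp [lstar, h, inf_eq_right.mpr hrge]
      have := starinv x
      rw [hstar, hstar1] at this
      exact hx this.symm
  · -- x > 1
    constructor
    · intro h
      rw [h, one_mul] at hrx
      exact absurd hrx (not_le.mpr hgt)
    · intro h
      rw [h, mul_one] at hlx
      exact absurd hlx (not_le.mpr hgt)
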